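/- Let n = 1, let r₁, r₂, r₃ > 0 and t₁, t₂, t₃ ∈ ℝ. Then the convolution σ_{r₁,t₁} ∗ σ_{r₂,t₂} ∗ σ_{r₃,t₃}, i.e. the pushforward of the product measure σ_{r₁,t₁} ⊗ σ_{r₂,t₂} ⊗ σ_{r₃,t₃} under the map (h₁,h₂,h₃) ↦ h₁·h₂·h₃ from (H^1)³ to H^1, is absolutely continuous with respect to Lebesgue (Haar) measure on H^1. -/

import Mathlib

open MeasureTheory

attribute [local instance] InnerProductSpace.complexToReal

noncomputable instance (n : ℕ) : MeasurableSpace (EuclideanSpace ℂ (Fin n)) := borel _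
instance (n : ℕ) : BorelSpace (EuclideanSpace ℂ (Fin n)) := ⟨rfl⟩

/-- The underlying space of the Heisenberg group `H^n = ℂ^n × ℝ`. -/
abbrev Heis (n : ℕ) := EuclideanSpace ℂ (Fin n) × ℝ

/-- The Heisenberg group multiplication
`(z,t)·(w,s) = (z+w, t+s+(1/2)Im⟨z,w⟩)` with `⟨z,w⟩ = ∑ j, z j * conj (w j)`. -/
noncomputable def heisMul {n : ℕ} (p q : Heis n) : Heis n :=
  (p.1 + q.1, p.2 + q.2 + (1 / 2) * (∑ j, p.1 j * (starRingEnd ℂ) (q.1 j)).im)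

/-- The normalized rotation-invariant surface probability measure on the unit
sphere of `ℂ^n`, obtained by normalizing the surface measure induced by the
Lebesgue (Haar) measure. -/
noncomputable def unitSphereProb (n : ℕ) :
    Measure (Metric.sphere (0 : EuclideanSpace ℂ (Fin n)) 1) :=
  (((volume : Measure (EuclideanSpace ℂ (Fin n))).toSphere Set.univ)⁻¹) •
    (volume : Measure (EuclideanSpace ℂ (Fin n))).toSphere

/-- The spherical measure `σ_{r,t}` on `H^n`: the pushforward of the normalized
surface probability measure of the unit sphere under `v ↦ (r·v, t)`. -/
noncomputable def heisSigma (n : ℕ) (r t : ℝ) : Measure (Heis n) :=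
  Measure.map
    (fun v : Metric.sphere (0 : EuclideanSpace ℂ (Fin n)) 1 =>
      (((r : ℂ) • (v : EuclideanSpace ℂ (Fin n)), t) : Heis n))
    (unitSphereProb n)


namespace Stmt15

open Set Complex Pointwise Real

lemma countable_exp_eq (w : ℂ) : Set.Countable {θ : ℝ | Complex.exp (θ * Complex.I) = w} := by
  by_cases h : ∃ θ₀ : ℝ, Complex.exp (θ₀ * Complex.I) = w
  · obtain ⟨θ₀, hθ₀⟩ := h
    have hsub : {θ : ℝ | Complex.exp (θ * Complex.I) = w} ⊆
        Set.range (fun n : ℤ => θ₀ + n * (2 * Real.pi)) := by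
      intro θ hθ
      simp only [Set.mem_setOf_eq] at hθ
      have h1 : Complex.exp ((θ : ℂ) * Complex.I) = Complex.exp ((θ₀ : ℂ) * Complex.I) := by
        rw [hθ, hθ₀]
      rw [Complex.exp_eq_exp_iff_exists_int] at h1
      obtain ⟨n, hn⟩ := h1
      refine ⟨n, ?_⟩
      have him := congrArg Complex.im hn
      simp [Complex.mul_im, Complex.add_im, Complex.mul_re] at him
      simp only [Set.mem_setOf_eq]
      linarith
    exact (Set.countable_range _).mono hsub
  · push_neg at h
    have : {θ : ℝ | Complex.exp (θ * Complex.I) = w} = ∅ := by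
      ext θ; simp only [Set.mem_setOf_eq, Set.mem_empty_iff_false, iff_false]
      exact h θ
    rw [this]; exact Set.countable_empty

lemma trig_null (A B C : ℝ) (hAB : A ≠ 0 ∨ B ≠ 0) :
    volume {θ : ℝ | A * Real.sin θ + B * Real.cos θ = C} = 0 := by
  have hlead : (B : ℂ) - A * Complex.I ≠ 0 := by
    intro h0
    rw [Complex.ext_iff] at h0
    simp at h0
    rcases hAB with h | h
    · exact h h0.2
    · exact h h0.1
  set p : Polynomial ℂ :=
    Polynomial.C ((B : ℂ) - A * Complex.I) * Polynomial.X ^ 2 +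
      Polynomial.C (-2 * C : ℂ) * Polynomial.X + Polynomial.C ((B : ℂ) + A * Complex.I) with hp
  have hpne : p ≠ 0 := by
    intro h0
    have h2 := congrArg (fun q : Polynomial ℂ => Polynomial.coeff q 2) h0
    simp only [hp, Polynomial.coeff_add, Polynomial.coeff_C_mul, Polynomial.coeff_X_pow,
      Polynomial.coeff_X, Polynomial.coeff_C, Polynomial.coeff_zero] at h2
    norm_num at h2
    exact hlead h2
  have hsub : {θ : ℝ | A * Real.sin θ + B * Real.cos θ = C} ⊆
      ⋃ w ∈ {x : ℂ | p.IsRoot x}, {θ : ℝ | Complex.exp (θ * Complex.I) = w} := by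
    intro θ hθ
    simp only [Set.mem_setOf_eq] at hθ
    refine Set.mem_biUnion ?_ rfl
    show p.IsRoot (Complex.exp (θ * Complex.I))
    have hc : ((A : ℂ)) * (Real.sin θ : ℂ) + (B : ℂ) * (Real.cos θ : ℂ) = (C : ℂ) := by
      exact_mod_cast congrArg (fun x : ℝ => (x : ℂ)) hθ
    have hpy : ((Real.sin θ : ℂ))^2 + ((Real.cos θ : ℂ))^2 = 1 := by
      exact_mod_cast Real.sin_sq_add_cos_sq θ
    simp only [Polynomial.IsRoot, hp, Polynomial.eval_add, Polynomial.eval_mul,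
      Polynomial.eval_pow, Polynomial.eval_C, Polynomial.eval_X]
    rw [Complex.exp_mul_I, ← Complex.ofReal_cos, ← Complex.ofReal_sin]
    linear_combination (2*((Real.cos θ : ℂ) + (Real.sin θ : ℂ) * Complex.I)) * hc
      + (-(B:ℂ) - (A:ℂ) * Complex.I) * hpy
      + ((B:ℂ)*(Real.sin θ:ℂ)^2 - 2*(A:ℂ)*(Real.cos θ:ℂ)*(Real.sin θ:ℂ)
          - (A:ℂ)*(Real.sin θ:ℂ)^2*Complex.I) * Complex.I_sq
  have hcnt : Set.Countable {θ : ℝ | A * Real.sin θ + B * Real.cos θ = C} :=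
    Set.Countable.mono hsub
      ((Polynomial.finite_setOf_isRoot hpne).countable.biUnion fun w _ => countable_exp_eq w)
  exact hcnt.measure_zero _


noncomputable def detF (r1 r2 r3 x y z : ℝ) : ℝ :=
  -(r1 * Real.sin x)*(r2 * Real.cos y)*((1/2)*(-(r1*r3*(Real.cos x*Real.cos z + Real.sin x*Real.sin z)) - r2*r3*(Real.cos y*Real.cos z + Real.sin y*Real.sin z))) - -(r1 * Real.sin x)*(r3 * Real.cos z)*((1/2)*(-(r1*r2*(Real.cos x*Real.cos y + Real.sin x*Real.sin y)) + r2*r3*(Real.cos y*Real.cos z + Real.sin y*Real.sin z))) - -(r2 * Real.sin y)*(r1 * Real.cos x)*((1/2)*(-(r1*r3*(Real.cos x*Real.cos z + Real.sin x*Real.sin z)) - r2*r3*(Real.cos y*Real.cos z + Real.sin y*Real.sin z))) + -(r2 * Real.sin y)*(r3 * Real.cos z)*((1/2)*(r1*r2*(Real.cos x*Real.cos y + Real.sin x*Real.sin y) + r1*r3*(Real.cos x*Real.cos z + Real.sin x*Real.sin z))) + -(r3 * Real.sin z)*(r1 * Real.cos x)*((1/2)*(-(r1*r2*(Real.cos x*Real.cos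 y + Real.sin x*Real.sin y)) + r2*r3*(Real.cos y*Real.cos z + Real.sin y*Real.sin z))) - -(r3 * Real.sin z)*(r2 * Real.cos y)*((1/2)*(r1*r2*(Real.cos x*Real.cos y + Real.sin x*Real.sin y) + r1*r3*(Real.cos x*Real.cos z + Real.sin x*Real.sin z)))

noncomputable def Adet (r1 r2 r3 x y : ℝ) : ℝ :=
  (r1*r2*r3/2) * (r1 * Real.cos y + r2*(Real.cos x*(Real.cos y^2 - Real.sin y^2) + 2*Real.sin x*Real.sin y*Real.cos y))

noncomputable def Bdet (r1 r2 r3 x y : ℝ) : ℝ :=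
  (r1*r2*r3/2) * (-(r1*Real.sin y) + r2*(Real.sin x*(Real.cos y^2 - Real.sin y^2) - 2*Real.cos x*Real.sin y*Real.cos y))

noncomputable def Cdet (r1 r2 r3 x y : ℝ) : ℝ :=
  (r1*r2*r3/2) * (r3*(Real.sin x*Real.cos y - Real.cos x*Real.sin y))

lemma detF_eq (r1 r2 r3 x y z : ℝ) :
    detF r1 r2 r3 x y z
      = Adet r1 r2 r3 x y * Real.sin z + Bdet r1 r2 r3 x y * Real.cos z + Cdet r1 r2 r3 x y := by
  have h1 := Real.sin_sq_add_cos_sq x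
  have h3 := Real.sin_sq_add_cos_sq z
  simp only [detF, Adet, Bdet, Cdet]
  linear_combination ((1/2)*r1^2*r2*r3*(Real.cos y * Real.sin z - Real.sin y * Real.cos z)) * h1
    + ((1/2)*r1*r2*r3^2*(Real.sin x * Real.cos y - Real.cos x * Real.sin y)) * h3

lemma AB_sq (r1 r2 r3 x y : ℝ) :
    Adet r1 r2 r3 x y ^ 2 + Bdet r1 r2 r3 x y ^ 2
      = (r1*r2*r3/2)^2 * (r1^2 + r2^2 + 2*r1*r2*(Real.cos x*Real.cos y + Real.sin x*Real.sin y)) := by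
  have h1 := Real.sin_sq_add_cos_sq x
  have h2 := Real.sin_sq_add_cos_sq y
  simp only [Adet, Bdet]
  linear_combination ((1/4)*r1^2*r2^4*r3^2) * h1
    + ((1/4)*r1^4*r2^2*r3^2 + (1/2)*Real.cos x*Real.cos y*r1^3*r2^3*r3^2
      + (1/4)*Real.cos x^2*r1^2*r2^4*r3^2 + (1/4)*Real.cos x^2*Real.cos y^2*r1^2*r2^4*r3^2
      + (1/4)*Real.cos x^2*Real.sin y^2*r1^2*r2^4*r3^2 + (1/2)*Real.sin x*Real.sin y*r1^3*r2^3*r3^2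
      + (1/4)*Real.sin x^2*r1^2*r2^4*r3^2 + (1/4)*Real.sin x^2*Real.cos y^2*r1^2*r2^4*r3^2
      + (1/4)*Real.sin x^2*Real.sin y^2*r1^2*r2^4*r3^2) * h2

lemma detF_null (r1 r2 r3 : ℝ) (hr1 : 0 < r1) (hr2 : 0 < r2) (hr3 : 0 < r3) :
    volume {p : ℝ × ℝ × ℝ | detF r1 r2 r3 p.1 p.2.1 p.2.2 = 0} = 0 := by
  have hcont : Continuous fun p : ℝ × ℝ × ℝ => detF r1 r2 r3 p.1 p.2.1 p.2.2 := by
    unfold detF; fun_prop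
  have hmeas : MeasurableSet {p : ℝ × ℝ × ℝ | detF r1 r2 r3 p.1 p.2.1 p.2.2 = 0} :=
    hcont.measurable (measurableSet_singleton 0)
  rw [show (volume : Measure (ℝ × ℝ × ℝ))
      = (volume : Measure ℝ).prod ((volume : Measure ℝ).prod (volume : Measure ℝ)) from rfl]
  rw [Measure.measure_prod_null hmeas]
  refine Filter.Eventually.of_forall fun x => ?_
  have hmeas2 : MeasurableSet {q : ℝ × ℝ | detF r1 r2 r3 x q.1 q.2 = 0} := by
    have : Continuous fun q : ℝ × ℝ => detF r1 r2 r3 x q.1 q.2 := by unfold detF; fun_prop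
    exact this.measurable (measurableSet_singleton 0)
  show ((volume : Measure ℝ).prod (volume : Measure ℝ))
      (Prod.mk x ⁻¹' {p : ℝ × ℝ × ℝ | detF r1 r2 r3 p.1 p.2.1 p.2.2 = 0}) = 0
  have hpre : Prod.mk x ⁻¹' {p : ℝ × ℝ × ℝ | detF r1 r2 r3 p.1 p.2.1 p.2.2 = 0}
      = {q : ℝ × ℝ | detF r1 r2 r3 x q.1 q.2 = 0} := rfl
  rw [hpre, Measure.measure_prod_null hmeas2]
  have hbad : volume {y : ℝ | Real.sin x * Real.sin y + Real.cos x * Real.cos y = -1} = 0 := by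
    refine trig_null _ _ _ ?_
    by_contra hc; push_neg at hc
    have := Real.sin_sq_add_cos_sq x
    rw [hc.1, hc.2] at this; norm_num at this
  have hae : ∀ᵐ y : ℝ, ¬ (Real.sin x * Real.sin y + Real.cos x * Real.cos y = -1) := by
    rw [ae_iff]; simpa using hbad
  filter_upwards [hae] with y hy
  show (volume : Measure ℝ) (Prod.mk y ⁻¹' {q : ℝ × ℝ | detF r1 r2 r3 x q.1 q.2 = 0}) = 0
  have hAB : Adet r1 r2 r3 x y ≠ 0 ∨ Bdet r1 r2 r3 x y ≠ 0 := by
    by_contra hc; push_neg at hc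
    have key := AB_sq r1 r2 r3 x y
    rw [hc.1, hc.2] at key
    have hgt : -1 < Real.cos x * Real.cos y + Real.sin x * Real.sin y := by
      have h1 : -1 ≤ Real.cos (x - y) := Real.neg_one_le_cos _
      rw [Real.cos_sub] at h1
      rcases h1.lt_or_eq with h | h
      · exact h
      · exact absurd (by linarith) hy
    have hpos : 0 < r1^2 + r2^2 + 2*r1*r2*(Real.cos x*Real.cos y + Real.sin x*Real.sin y) := by
      nlinarith [sq_nonneg (r1 - r2), mul_pos hr1 hr2]
    have hK : 0 < (r1*r2*r3/2)^2 := by positivity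
    nlinarith [mul_pos hK hpos]
  refine measure_mono_null ?_ (trig_null (Adet r1 r2 r3 x y) (Bdet r1 r2 r3 x y)
    (-(Cdet r1 r2 r3 x y)) hAB)
  intro z hz
  simp only [Set.mem_preimage, Set.mem_setOf_eq] at hz ⊢
  rw [detF_eq] at hz
  linarith


lemma mapAC {E : Type*} [NormedAddCommGroup E] [NormedSpace ℝ E] [FiniteDimensional ℝ E]
    [MeasurableSpace E] [BorelSpace E] (μ : Measure E) [μ.IsAddHaarMeasure]
    {f : E → E} (hf : ContDiff ℝ 1 f) (hd : μ {x | (fderiv ℝ f x).det = 0} = 0) :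
    μ.map f ≪ μ := by
  have hfm : Measurable f := hf.continuous.measurable
  have hfd : Continuous fun x => (fderiv ℝ f x).det :=
    ContinuousLinearMap.continuous_det.comp (hf.continuous_fderiv one_ne_zero)
  set D : Set E := {x | (fderiv ℝ f x).det ≠ 0} with hD
  have hDopen : IsOpen D := isOpen_compl_singleton.preimage hfd
  have key : ∀ x : D, ∃ U : Set E, IsOpen U ∧ (x : E) ∈ U ∧ U ⊆ D ∧ Set.InjOn f U := by
    rintro ⟨x, hx⟩
    have hdet : (fderiv ℝ f x).det ≠ 0 := hx
    have hstrict : HasStrictFDerivAt f (fderiv ℝ f x) x := hf.hasStrictFDerivAt one_ne_zero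
    set e : E ≃L[ℝ] E :=
      (LinearMap.equivOfDetNeZero (fderiv ℝ f x).toLinearMap hdet).toContinuousLinearEquiv with he
    have hee : (e : E →L[ℝ] E) = fderiv ℝ f x := by
      ext v; rfl
    have hstrict' : HasStrictFDerivAt f (e : E →L[ℝ] E) x := by rw [hee]; exact hstrict
    set Φ := hstrict'.toOpenPartialHomeomorph f with hΦ
    have hcoe : ⇑Φ = f := hstrict'.toOpenPartialHomeomorph_coe
    refine ⟨Φ.source ∩ D, Φ.open_source.inter hDopen,
      ⟨hstrict'.mem_toOpenPartialHomeomorph_source, hx⟩, inter_subset_right, ?_⟩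
    have : Set.InjOn f Φ.source := hcoe ▸ Φ.injOn
    exact this.mono inter_subset_left
  choose U hUopen hUmem hUD hUinj using key
  obtain ⟨T, hTcount, hTeq⟩ := TopologicalSpace.isOpen_iUnion_countable U hUopen
  have hDsub : D ⊆ ⋃ i ∈ T, U i := by
    intro x hx
    rw [hTeq]
    exact Set.mem_iUnion.2 ⟨⟨x, hx⟩, hUmem _⟩
  refine Measure.AbsolutelyContinuous.mk fun N hN hN0 => ?_
  rw [Measure.map_apply hfm hN]
  have hsplit : f ⁻¹' N ⊆ Dᶜ ∪ ⋃ i ∈ T, (U i ∩ f ⁻¹' N) := by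
    intro x hx
    by_cases hxD : x ∈ D
    · rcases Set.mem_iUnion₂.1 (hDsub hxD) with ⟨i, hi, hxi⟩
      exact Or.inr (Set.mem_iUnion₂.2 ⟨i, hi, ⟨hxi, hx⟩⟩)
    · exact Or.inl hxD
  have hDc : μ Dᶜ = 0 := by
    have : Dᶜ = {x | (fderiv ℝ f x).det = 0} := by
      ext x; simp [hD]
    rw [this]; exact hd
  have hpieces : μ (⋃ i ∈ T, (U i ∩ f ⁻¹' N)) = 0 := by
    refine (measure_biUnion_null_iff hTcount).2 fun i _ => ?_
    have hUm : MeasurableSet (U i) := (hUopen i).measurableSet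
    set d : E → ENNReal := fun x => ENNReal.ofReal |(fderiv ℝ f x).det| with hdd
    have hdmeas : Measurable d := (ENNReal.continuous_ofReal.comp hfd.abs).measurable
    have hmap := map_withDensity_abs_det_fderiv_eq_addHaar μ hUm.nullMeasurableSet
      (fun x _ => ((hf.differentiable one_ne_zero) x).hasFDerivAt.hasFDerivWithinAt)
      (hUinj i)
    have h2 : ((μ.restrict (U i)).withDensity d) (f ⁻¹' N) = 0 := by
      have h3 : ((μ.restrict (U i)).withDensity d) (f ⁻¹' N)
          = (μ.restrict (f '' U i)) N := by
        rw [← Measure.map_apply hfm hN, hmap]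
      rw [h3]
      exact le_antisymm (le_trans (Measure.restrict_apply_le _ N) hN0.le) zero_le
  -- derive restricted measure zero
    have h4 : (μ.restrict (U i)) (f ⁻¹' N) = 0 := by
      rw [withDensity_apply d (hfm hN)] at h2
      have h5 : d =ᵐ[(μ.restrict (U i)).restrict (f ⁻¹' N)] 0 :=
        (lintegral_eq_zero_iff hdmeas).1 h2
      have h6 : ((μ.restrict (U i)).restrict (f ⁻¹' N)) {x | d x ≠ 0} = 0 := by
        have := h5
        rw [Filter.EventuallyEq, ae_iff] at this
        simpa using this
      have h7 : ((μ.restrict (U i)).restrict (f ⁻¹' N)) {x | d x = 0} = 0 := by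
        have hempty : {x | d x = 0} ∩ (f ⁻¹' N ∩ U i) = ∅ := by
          ext x
          simp only [Set.mem_inter_iff, Set.mem_setOf_eq, Set.mem_empty_iff_false, iff_false]
          rintro ⟨hx0, _, hxU⟩
          have hne : (fderiv ℝ f x).det ≠ 0 := hUD i hxU
          rw [hdd] at hx0
          simp only [ENNReal.ofReal_eq_zero] at hx0
          have := abs_nonneg (fderiv ℝ f x).det
          have habs : |(fderiv ℝ f x).det| = 0 := le_antisymm hx0 this
          exact hne (abs_eq_zero.1 habs)
        rw [Measure.restrict_restrict (hfm hN),
          Measure.restrict_apply' ((hfm hN).inter hUm), hempty]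
        simp
      have h8 : ((μ.restrict (U i)).restrict (f ⁻¹' N)) Set.univ = 0 := by
        have : (Set.univ : Set E) ⊆ {x | d x ≠ 0} ∪ {x | d x = 0} := by
          intro x _
          by_cases h : d x = 0
          · exact Or.inr h
          · exact Or.inl h
        exact le_antisymm (le_trans (measure_mono this)
          (le_trans (measure_union_le _ _) (by rw [h6, h7]; simp))) zero_le
      rw [Measure.restrict_apply_univ] at h8
      exact h8
    rw [Measure.restrict_apply' hUm] at h4
    rw [Set.inter_comm] at h4
    exact h4
  refine le_antisymm ?_ zero_le
  calc μ (f ⁻¹' N) ≤ μ (Dᶜ ∪ ⋃ i ∈ T, (U i ∩ f ⁻¹' N)) := measure_mono hsplit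
    _ ≤ μ Dᶜ + μ (⋃ i ∈ T, (U i ∩ f ⁻¹' N)) := measure_union_le _ _
    _ = 0 := by rw [hDc, hpieces]; simp


noncomputable def Q1 : ℝ × ℝ × ℝ →L[ℝ] ℝ := ContinuousLinearMap.fst ℝ ℝ (ℝ × ℝ)
noncomputable def Q2 : ℝ × ℝ × ℝ →L[ℝ] ℝ :=
  (ContinuousLinearMap.fst ℝ ℝ ℝ).comp (ContinuousLinearMap.snd ℝ ℝ (ℝ × ℝ))
noncomputable def Q3 : ℝ × ℝ × ℝ →L[ℝ] ℝ :=
  (ContinuousLinearMap.snd ℝ ℝ ℝ).comp (ContinuousLinearMap.snd ℝ ℝ (ℝ × ℝ))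

@[simp] lemma Q1_apply (v : ℝ × ℝ × ℝ) : Q1 v = v.1 := rfl
@[simp] lemma Q2_apply (v : ℝ × ℝ × ℝ) : Q2 v = v.2.1 := rfl
@[simp] lemma Q3_apply (v : ℝ × ℝ × ℝ) : Q3 v = v.2.2 := rfl

noncomputable def row (a b c : ℝ) : ℝ × ℝ × ℝ →L[ℝ] ℝ := a • Q1 + b • Q2 + c • Q3

@[simp] lemma row_apply (a b c : ℝ) (v : ℝ × ℝ × ℝ) :
    row a b c v = a * v.1 + b * v.2.1 + c * v.2.2 := by
  simp [row]

noncomputable def clm3 (a b c d e f g h i : ℝ) : ℝ × ℝ × ℝ →L[ℝ] ℝ × ℝ × ℝ :=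
  (row a b c).prod ((row d e f).prod (row g h i))

noncomputable def eL : (ℝ × ℝ × ℝ) ≃ₗ[ℝ] (Fin 3 → ℝ) where
  toFun p := ![p.1, p.2.1, p.2.2]
  invFun v := (v 0, v 1, v 2)
  map_add' p q := by
    funext i
    fin_cases i <;> simp
  map_smul' c p := by
    funext i
    fin_cases i <;> simp
  left_inv p := by simp
  right_inv v := by
    funext i
    fin_cases i <;> simp

lemma det_clm3 (a b c d e f g h i : ℝ) :
    (clm3 a b c d e f g h i).det
      = a*e*i - a*f*h - b*d*i + b*f*g + c*d*h - c*e*g := by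
  have h1 : (clm3 a b c d e f g h i).det
      = LinearMap.det (eL.conj (clm3 a b c d e f g h i : (ℝ×ℝ×ℝ) →ₗ[ℝ] (ℝ×ℝ×ℝ))) :=
    (LinearMap.det_conj _ eL).symm
  have h2 : eL.conj ((clm3 a b c d e f g h i : (ℝ×ℝ×ℝ) →ₗ[ℝ] (ℝ×ℝ×ℝ)))
      = Matrix.toLin' !![a,b,c;d,e,f;g,h,i] := by
    apply LinearMap.ext
    intro v
    funext j
    fin_cases j <;>
      simp [LinearEquiv.conj_apply, eL, Matrix.toLin'_apply, Matrix.mulVec, dotProduct,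
        Fin.sum_univ_three, clm3] <;> ring
  rw [h1, h2, ← LinearMap.det_toMatrix' , LinearMap.toMatrix'_toLin']
  simp [Matrix.det_fin_three]
  try ring

variable (r₁ r₂ r₃ t₁ t₂ t₃ : ℝ)

noncomputable def Gmap (p : ℝ × ℝ × ℝ) : ℝ × ℝ × ℝ :=
  (r₁ * Real.cos p.1 + r₂ * Real.cos p.2.1 + r₃ * Real.cos p.2.2,
   (r₁ * Real.sin p.1 + r₂ * Real.sin p.2.1 + r₃ * Real.sin p.2.2,
    t₁ + t₂ + t₃ + (1/2) * (r₁*r₂*(Real.sin p.1 * Real.cos p.2.1 - Real.cos p.1 * Real.sin p.2.1)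
      + r₁*r₃*(Real.sin p.1 * Real.cos p.2.2 - Real.cos p.1 * Real.sin p.2.2)
      + r₂*r₃*(Real.sin p.2.1 * Real.cos p.2.2 - Real.cos p.2.1 * Real.sin p.2.2))))

noncomputable def dG (p : ℝ × ℝ × ℝ) : ℝ × ℝ × ℝ →L[ℝ] ℝ × ℝ × ℝ :=
  clm3 (-(r₁ * Real.sin p.1)) (-(r₂ * Real.sin p.2.1)) (-(r₃ * Real.sin p.2.2))
    (r₁ * Real.cos p.1) (r₂ * Real.cos p.2.1) (r₃ * Real.cos p.2.2)
    ((1/2)*(r₁*r₂*(Real.cos p.1*Real.cos p.2.1 + Real.sin p.1*Real.sin p.2.1)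
      + r₁*r₃*(Real.cos p.1*Real.cos p.2.2 + Real.sin p.1*Real.sin p.2.2)))
    ((1/2)*(-(r₁*r₂*(Real.cos p.1*Real.cos p.2.1 + Real.sin p.1*Real.sin p.2.1))
      + r₂*r₃*(Real.cos p.2.1*Real.cos p.2.2 + Real.sin p.2.1*Real.sin p.2.2)))
    ((1/2)*(-(r₁*r₃*(Real.cos p.1*Real.cos p.2.2 + Real.sin p.1*Real.sin p.2.2))
      - r₂*r₃*(Real.cos p.2.1*Real.cos p.2.2 + Real.sin p.2.1*Real.sin p.2.2)))

lemma hasFDerivAt_Gmap (p : ℝ × ℝ × ℝ) :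
    HasFDerivAt (Gmap r₁ r₂ r₃ t₁ t₂ t₃) (dG r₁ r₂ r₃ p) p := by
  have hx1 : HasFDerivAt (fun p : ℝ × ℝ × ℝ => p.1) Q1 p := hasFDerivAt_fst
  have hx2 : HasFDerivAt (fun p : ℝ × ℝ × ℝ => p.2.1) Q2 p :=
    hasFDerivAt_fst.comp p hasFDerivAt_snd
  have hx3 : HasFDerivAt (fun p : ℝ × ℝ × ℝ => p.2.2) Q3 p :=
    hasFDerivAt_snd.comp p hasFDerivAt_snd
  have hs1 : HasFDerivAt (fun p : ℝ × ℝ × ℝ => Real.sin p.1) (Real.cos p.1 • Q1) p :=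
    (Real.hasDerivAt_sin p.1).comp_hasFDerivAt p hx1
  have hs2 : HasFDerivAt (fun p : ℝ × ℝ × ℝ => Real.sin p.2.1) (Real.cos p.2.1 • Q2) p :=
    by have := (Real.hasDerivAt_sin p.2.1).comp_hasFDerivAt p hx2; exact this
  have hs3 : HasFDerivAt (fun p : ℝ × ℝ × ℝ => Real.sin p.2.2) (Real.cos p.2.2 • Q3) p :=
    by have := (Real.hasDerivAt_sin p.2.2).comp_hasFDerivAt p hx3; exact this
  have hc1 : HasFDerivAt (fun p : ℝ × ℝ × ℝ => Real.cos p.1) (-Real.sin p.1 • Q1) p :=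
    (Real.hasDerivAt_cos p.1).comp_hasFDerivAt p hx1
  have hc2 : HasFDerivAt (fun p : ℝ × ℝ × ℝ => Real.cos p.2.1) (-Real.sin p.2.1 • Q2) p :=
    by have := (Real.hasDerivAt_cos p.2.1).comp_hasFDerivAt p hx2; exact this
  have hc3 : HasFDerivAt (fun p : ℝ × ℝ × ℝ => Real.cos p.2.2) (-Real.sin p.2.2 • Q3) p :=
    by have := (Real.hasDerivAt_cos p.2.2).comp_hasFDerivAt p hx3; exact this
  have hrow1 : HasFDerivAt
      (fun p : ℝ × ℝ × ℝ => r₁ * Real.cos p.1 + r₂ * Real.cos p.2.1 + r₃ * Real.cos p.2.2)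
      (row (-(r₁ * Real.sin p.1)) (-(r₂ * Real.sin p.2.1)) (-(r₃ * Real.sin p.2.2))) p := by
    have := ((hc1.const_mul r₁).add (hc2.const_mul r₂)).add (hc3.const_mul r₃)
    refine HasFDerivAt.congr_fderiv this ?_
    refine ContinuousLinearMap.ext fun v => ?_
    simp
    ring
  have hrow2 : HasFDerivAt
      (fun p : ℝ × ℝ × ℝ => r₁ * Real.sin p.1 + r₂ * Real.sin p.2.1 + r₃ * Real.sin p.2.2)
      (row (r₁ * Real.cos p.1) (r₂ * Real.cos p.2.1) (r₃ * Real.cos p.2.2)) p := by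
    have := ((hs1.const_mul r₁).add (hs2.const_mul r₂)).add (hs3.const_mul r₃)
    refine HasFDerivAt.congr_fderiv this ?_
    refine ContinuousLinearMap.ext fun v => ?_
    simp
    ring
  have hrow3 : HasFDerivAt
      (fun p : ℝ × ℝ × ℝ => t₁ + t₂ + t₃
        + (1/2) * (r₁*r₂*(Real.sin p.1 * Real.cos p.2.1 - Real.cos p.1 * Real.sin p.2.1)
          + r₁*r₃*(Real.sin p.1 * Real.cos p.2.2 - Real.cos p.1 * Real.sin p.2.2)
          + r₂*r₃*(Real.sin p.2.1 * Real.cos p.2.2 - Real.cos p.2.1 * Real.sin p.2.2)))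
      (row ((1/2)*(r₁*r₂*(Real.cos p.1*Real.cos p.2.1 + Real.sin p.1*Real.sin p.2.1)
          + r₁*r₃*(Real.cos p.1*Real.cos p.2.2 + Real.sin p.1*Real.sin p.2.2)))
        ((1/2)*(-(r₁*r₂*(Real.cos p.1*Real.cos p.2.1 + Real.sin p.1*Real.sin p.2.1))
          + r₂*r₃*(Real.cos p.2.1*Real.cos p.2.2 + Real.sin p.2.1*Real.sin p.2.2)))
        ((1/2)*(-(r₁*r₃*(Real.cos p.1*Real.cos p.2.2 + Real.sin p.1*Real.sin p.2.2))
          - r₂*r₃*(Real.cos p.2.1*Real.cos p.2.2 + Real.sin p.2.1*Real.sin p.2.2)))) p := by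
    have hterm12 := ((hs1.mul hc2).sub (hc1.mul hs2)).const_mul (r₁*r₂)
    have hterm13 := ((hs1.mul hc3).sub (hc1.mul hs3)).const_mul (r₁*r₃)
    have hterm23 := ((hs2.mul hc3).sub (hc2.mul hs3)).const_mul (r₂*r₃)
    have := (hasFDerivAt_const (t₁ + t₂ + t₃) p).add
      (((hterm12.add hterm13).add hterm23).const_mul (1/2))
    refine HasFDerivAt.congr_fderiv this ?_
    refine ContinuousLinearMap.ext fun v => ?_
    simp
    ring
  exact HasFDerivAt.prodMk hrow1 (HasFDerivAt.prodMk hrow2 hrow3)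

lemma contDiff_Gmap : ContDiff ℝ 1 (Gmap r₁ r₂ r₃ t₁ t₂ t₃) := by
  have hcos : ContDiff ℝ 1 Real.cos := Real.contDiff_cos.of_le le_top
  have hsin : ContDiff ℝ 1 Real.sin := Real.contDiff_sin.of_le le_top
  have h1 : ContDiff ℝ 1 (fun p : ℝ × ℝ × ℝ => p.1) := contDiff_fst
  have h2 : ContDiff ℝ 1 (fun p : ℝ × ℝ × ℝ => p.2.1) := contDiff_fst.comp contDiff_snd
  have h3 : ContDiff ℝ 1 (fun p : ℝ × ℝ × ℝ => p.2.2) := contDiff_snd.comp contDiff_snd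
  have hc1 := hcos.comp h1; have hc2 := hcos.comp h2; have hc3 := hcos.comp h3
  have hs1 := hsin.comp h1; have hs2 := hsin.comp h2; have hs3 := hsin.comp h3
  exact (((contDiff_const.mul hc1).add (contDiff_const.mul hc2)).add
      (contDiff_const.mul hc3)).prodMk
    (((((contDiff_const.mul hs1).add (contDiff_const.mul hs2)).add
      (contDiff_const.mul hs3))).prodMk
      (contDiff_const.add (contDiff_const.mul
        ((((contDiff_const.mul ((hs1.mul hc2).sub (hc1.mul hs2))).add
          (contDiff_const.mul ((hs1.mul hc3).sub (hc1.mul hs3)))).add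
          (contDiff_const.mul ((hs2.mul hc3).sub (hc2.mul hs3))))))))


noncomputable def Lc : EuclideanSpace ℂ (Fin 1) ≃ₗᵢ[ℝ] ℂ where
  toFun v := v 0
  invFun z := EuclideanSpace.single 0 z
  map_add' v w := rfl
  map_smul' c v := rfl
  left_inv v := by
    ext j
    have hj : j = 0 := Subsingleton.elim j 0
    subst hj
    simp [EuclideanSpace.single_apply]
  right_inv z := by simp [EuclideanSpace.single_apply]
  norm_map' v := by
    show ‖v 0‖ = ‖v‖
    rw [show ‖v‖ = Real.sqrt (∑ i, ‖v i‖ ^ 2) from EuclideanSpace.norm_eq v,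
      Fin.sum_univ_one, Real.sqrt_sq (norm_nonneg _)]

@[simp] lemma Lc_apply (v : EuclideanSpace ℂ (Fin 1)) : Lc v = v 0 := rfl
@[simp] lemma Lc_symm_apply (z : ℂ) : Lc.symm z = EuclideanSpace.single 0 z := rfl

lemma Lc_measurePreserving : MeasurePreserving Lc volume volume :=
  Lc.measurePreserving

noncomputable def eu (θ : ℝ) : EuclideanSpace ℂ (Fin 1) := Lc.symm (Complex.exp (θ * Complex.I))

lemma norm_eu (θ : ℝ) : ‖eu θ‖ = 1 := by
  rw [eu, Lc.symm.norm_map, Complex.norm_exp_ofReal_mul_I]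

lemma continuous_eu : Continuous eu :=
  Lc.symm.continuous.comp (Complex.continuous_exp.comp (Complex.continuous_ofReal.mul
    continuous_const))

noncomputable def esph (θ : ℝ) : Metric.sphere (0 : EuclideanSpace ℂ (Fin 1)) 1 :=
  ⟨eu θ, by rw [mem_sphere_zero_iff_norm]; exact norm_eu θ⟩

lemma continuous_esph : Continuous esph := continuous_eu.subtype_mk _

noncomputable def Me : EuclideanSpace ℂ (Fin 1) ≃ᵐ ℝ × ℝ :=
  Lc.toMeasurableEquiv.trans Complex.measurableEquivRealProd

lemma Me_apply (v : EuclideanSpace ℂ (Fin 1)) : Me v = ((v 0).re, (v 0).im) := rfl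

lemma Me_measurePreserving : MeasurePreserving Me volume volume :=
  Complex.volume_preserving_equiv_real_prod.comp Lc_measurePreserving

lemma volume_eq_Me_image (S : Set (EuclideanSpace ℂ (Fin 1))) :
    volume S = volume (Me '' S) := by
  have h1 : (volume : Measure (ℝ × ℝ)) (Me '' S)
      = (Measure.map Me volume) (Me '' S) := by rw [Me_measurePreserving.map_eq]
  rw [h1, MeasurableEquiv.map_apply, Set.preimage_image_eq S Me.injective]

open Real in
lemma toSphere_ac :
    (volume : Measure (EuclideanSpace ℂ (Fin 1))).toSphere ≪
      Measure.map esph (volume.restrict (Set.Ioo (-π) π)) := by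
  refine Measure.AbsolutelyContinuous.mk fun N hN h0 => ?_
  rw [Measure.map_apply continuous_esph.measurable hN] at h0
  rw [Measure.restrict_apply' measurableSet_Ioo] at h0
  rw [Measure.toSphere_apply' _ hN]
  refine mul_eq_zero.2 (Or.inr ?_)
  rw [volume_eq_Me_image]
  set W' : Set ℝ := (esph ⁻¹' N) ∩ Set.Ioo (-π) π with hW'
  have hW'meas : MeasurableSet W' :=
    (continuous_esph.measurable hN).inter measurableSet_Ioo
  have hsub : Me '' (Set.Ioo (0:ℝ) 1 • (Subtype.val '' N))
      ⊆ (polarCoord.symm '' (Set.Ioo (0:ℝ) 1 ×ˢ W')) ∪ {q : ℝ × ℝ | q.2 = 0} := by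
    rintro q hq
    rcases hq with ⟨w, hw, rfl⟩
    rcases hw with ⟨t, ht, v, hv, rfl⟩
    rcases hv with ⟨n, hnN, rfl⟩
    set z : ℂ := Lc ↑n with hz
    have habs : ‖z‖ = 1 := by
      rw [hz, Lc.norm_map]
      exact mem_sphere_zero_iff_norm.1 n.2
    have hMe : Me (t • (n : EuclideanSpace ℂ (Fin 1))) = (t * z.re, t * z.im) := by
      rw [Me_apply]
      have : ((t • (n : EuclideanSpace ℂ (Fin 1))) 0) = (t : ℂ) * z := by
        rw [hz]; rfl
      rw [this]
      simp
    rcases eq_or_lt_of_le (Complex.arg_le_pi z) with harg | harg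
    · right
      have him : z.im = 0 := (Complex.arg_eq_pi_iff.1 harg).2
      simp only [Set.mem_setOf_eq, hMe, him, mul_zero]
    · left
      set θ := Complex.arg z with hθ
      have hzexp : Complex.exp (θ * Complex.I) = z := by
        have := Complex.norm_mul_exp_arg_mul_I z
        rwa [habs, Complex.ofReal_one, one_mul] at this
      have hesph : esph θ = n := by
        apply Subtype.ext
        show eu θ = ↑n
        rw [eu, hzexp, hz, Lc.symm_apply_apply]
      refine ⟨(t, θ), ⟨ht, ?_, Complex.neg_pi_lt_arg z, harg⟩, ?_⟩
      · show esph θ ∈ N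
        rw [hesph]; exact hnN
      · show (t * Real.cos θ, t * Real.sin θ) = Me (t • (n : EuclideanSpace ℂ (Fin 1)))
        rw [hMe, ← hzexp]
        simp [Complex.exp_ofReal_mul_I_re, Complex.exp_ofReal_mul_I_im]
  refine measure_mono_null hsub (measure_union_null ?_ ?_)
  · have hsnull : (volume : Measure (ℝ × ℝ)) (Set.Ioo (0:ℝ) 1 ×ˢ W') = 0 := by
      rw [show (volume : Measure (ℝ × ℝ)) = (volume : Measure ℝ).prod (volume : Measure ℝ)
        from rfl, Measure.prod_prod, h0, mul_zero]
    refine le_antisymm (le_trans (addHaar_image_le_lintegral_abs_det_fderiv volume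
      (measurableSet_Ioo.prod hW'meas)
      (fun x _ => (hasFDerivAt_polarCoord_symm x).hasFDerivWithinAt)) ?_) zero_le
    rw [setLIntegral_measure_zero _ _ hsnull]
  · have : {q : ℝ × ℝ | q.2 = 0} = (Set.univ : Set ℝ) ×ˢ ({0} : Set ℝ) := by
      ext q
      simp only [Set.mem_setOf_eq, Set.mem_prod, Set.mem_univ, Set.mem_singleton_iff, true_and]
    rw [this, show (volume : Measure (ℝ × ℝ)) = (volume : Measure ℝ).prod (volume : Measure ℝ)
      from rfl, Measure.prod_prod]
    simp

lemma unitSphereProb_finite_aux :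
    (unitSphereProb 1) Set.univ < ⊤ := by
  rw [unitSphereProb, Measure.smul_apply]
  rcases eq_or_ne (((volume : Measure (EuclideanSpace ℂ (Fin 1))).toSphere) Set.univ) 0 with h | h
  · rw [h]; simp
  · rw [smul_eq_mul, ENNReal.inv_mul_cancel h (measure_ne_top _ _)]
    exact ENNReal.one_lt_top

instance : IsFiniteMeasure (unitSphereProb 1) := ⟨unitSphereProb_finite_aux⟩







noncomputable def Amap (p : ℝ × ℝ × ℝ) : Heis 1 :=
  (Lc.symm (Complex.measurableEquivRealProd.symm (p.1, p.2.1)), p.2.2)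

lemma Amap_measurePreserving : MeasurePreserving Amap volume volume := by
  have mp1 : MeasurePreserving (MeasurableEquiv.prodAssoc.symm : ℝ × ℝ × ℝ ≃ᵐ (ℝ × ℝ) × ℝ)
      volume volume := (volume_preserving_prodAssoc).symm _
  have mpf : MeasurePreserving
      (fun q : ℝ × ℝ => Lc.symm (Complex.measurableEquivRealProd.symm q)) volume volume :=
    Lc.symm.measurePreserving.comp (Complex.volume_preserving_equiv_real_prod.symm _)
  have mp2 : MeasurePreserving
      (Prod.map (fun q : ℝ × ℝ => Lc.symm (Complex.measurableEquivRealProd.symm q)) (id : ℝ → ℝ))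
      volume volume := mpf.prod (MeasurePreserving.id _)
  exact mp2.comp mp1

lemma measurable_Amap : Measurable Amap := Amap_measurePreserving.measurable

noncomputable def phiH (r t : ℝ) (θ : ℝ) : Heis 1 := (((r : ℂ) • eu θ), t)

lemma measurable_phiH (r t : ℝ) : Measurable (phiH r t) :=
  ((continuous_eu.const_smul ((r : ℂ))).prodMk continuous_const).measurable

lemma heisSigma_ac (r t : ℝ) :
    heisSigma 1 r t ≪ Measure.map (phiH r t) (volume.restrict (Set.Ioo (-π) π)) := by
  have hinc : Measurable (fun v : Metric.sphere (0 : EuclideanSpace ℂ (Fin 1)) 1 =>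
      ((((r : ℂ) • (v : EuclideanSpace ℂ (Fin 1)), t)) : Heis 1)) :=
    ((continuous_subtype_val.const_smul ((r : ℂ))).prodMk continuous_const).measurable
  have h1 : unitSphereProb 1 ≪ Measure.map esph (volume.restrict (Set.Ioo (-π) π)) := by
    refine Measure.AbsolutelyContinuous.trans ?_ toSphere_ac
    rw [unitSphereProb]
    exact Measure.smul_absolutelyContinuous
  have h2 := h1.map hinc
  rw [heisSigma]
  refine h2.trans ?_
  rw [Measure.map_map hinc continuous_esph.measurable]
  have hco : ((fun v : Metric.sphere (0 : EuclideanSpace ℂ (Fin 1)) 1 =>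
      ((((r : ℂ) • (v : EuclideanSpace ℂ (Fin 1)), t)) : Heis 1)) ∘ esph) = phiH r t := rfl
  rw [hco]

lemma heisSigma_finite (r t : ℝ) : IsFiniteMeasure (heisSigma 1 r t) := by
  have hinc : Measurable (fun v : Metric.sphere (0 : EuclideanSpace ℂ (Fin 1)) 1 =>
      ((((r : ℂ) • (v : EuclideanSpace ℂ (Fin 1)), t)) : Heis 1)) :=
    ((continuous_subtype_val.const_smul ((r : ℂ))).prodMk continuous_const).measurable
  constructor
  rw [heisSigma, Measure.map_apply hinc MeasurableSet.univ, Set.preimage_univ]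
  exact measure_lt_top _ _

lemma continuous_heisMul2 : Continuous (fun q : Heis 1 × Heis 1 => heisMul q.1 q.2) := by
  unfold heisMul
  refine Continuous.prodMk ?_ ?_
  · exact ((continuous_fst.comp continuous_fst).add (continuous_fst.comp continuous_snd))
  · refine Continuous.add ?_ ?_
    · exact ((continuous_snd.comp continuous_fst).add (continuous_snd.comp continuous_snd))
    · refine Continuous.mul continuous_const ?_
      refine Complex.continuous_im.comp ?_
      refine continuous_finset_sum _ fun j _ => ?_
      refine Continuous.mul ?_ ?_
      · exact (continuous_apply j).comp ((PiLp.continuous_ofLp _ _).comp (continuous_fst.comp continuous_fst))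
      · exact Complex.continuous_conj.comp
          ((continuous_apply j).comp ((PiLp.continuous_ofLp _ _).comp (continuous_fst.comp continuous_snd)))

lemma continuous_mul3 :
    Continuous (fun p : Heis 1 × Heis 1 × Heis 1 => heisMul (heisMul p.1 p.2.1) p.2.2) := by
  have h2 := continuous_heisMul2
  exact h2.comp ((h2.comp (continuous_fst.prodMk
    (continuous_fst.comp continuous_snd))).prodMk (continuous_snd.comp continuous_snd))



end Stmt15

instance : (volume : Measure (ℝ × ℝ × ℝ)).IsAddHaarMeasure :=
  MeasureTheory.Measure.prod.instIsAddHaarMeasure _ _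


namespace Stmt15

open Complex in
@[simp] lemma eu_apply (θ : ℝ) : eu θ 0 = Complex.exp (θ * Complex.I) := by
  simp [eu, EuclideanSpace.single_apply]

lemma comp_eq (r₁ r₂ r₃ t₁ t₂ t₃ : ℝ) :
    ((fun p : Heis 1 × Heis 1 × Heis 1 => heisMul (heisMul p.1 p.2.1) p.2.2)
        ∘ (Prod.map (phiH r₁ t₁) (Prod.map (phiH r₂ t₂) (phiH r₃ t₃))))
      = Amap ∘ Gmap r₁ r₂ r₃ t₁ t₂ t₃ := by
  funext p
  obtain ⟨θ₁, θ₂, θ₃⟩ := p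
  show heisMul (heisMul (phiH r₁ t₁ θ₁) (phiH r₂ t₂ θ₂)) (phiH r₃ t₃ θ₃)
      = Amap (Gmap r₁ r₂ r₃ t₁ t₂ t₃ (θ₁, θ₂, θ₃))
  simp only [heisMul, phiH, Amap, Gmap, Fin.sum_univ_one]
  refine Prod.ext ?_ ?_
  · show ((r₁ : ℂ) • eu θ₁ + (r₂ : ℂ) • eu θ₂) + (r₃ : ℂ) • eu θ₃ = _
    apply Lc.injective
    rw [show ∀ z, Lc (Lc.symm z) = z from fun z => Lc.apply_symm_apply z]
    rw [map_add, map_add]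
    simp only [Lc_apply, PiLp.smul_apply, smul_eq_mul, eu_apply,
      Complex.measurableEquivRealProd_symm_apply]
    apply Complex.ext <;>
      simp [Complex.add_re, Complex.add_im, Complex.re_ofReal_mul, Complex.im_ofReal_mul,
        Complex.exp_ofReal_mul_I_re, Complex.exp_ofReal_mul_I_im]
  · show _ = t₁ + t₂ + t₃ + _
    simp only [PiLp.add_apply, PiLp.smul_apply, smul_eq_mul, eu_apply]
    simp only [Complex.add_im, Complex.add_re, Complex.mul_im, Complex.mul_re,
      Complex.conj_re, Complex.conj_im, Complex.ofReal_re, Complex.ofReal_im,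
      Complex.exp_ofReal_mul_I_re, Complex.exp_ofReal_mul_I_im]
    ring

end Stmt15

theorem stmt15 (r₁ r₂ r₃ : ℝ) (hr₁ : 0 < r₁) (hr₂ : 0 < r₂) (hr₃ : 0 < r₃) (t₁ t₂ t₃ : ℝ) :
    Measure.map (fun p : Heis 1 × Heis 1 × Heis 1 => heisMul (heisMul p.1 p.2.1) p.2.2)
        ((heisSigma 1 r₁ t₁).prod ((heisSigma 1 r₂ t₂).prod (heisSigma 1 r₃ t₃))) ≪
      (volume : Measure (Heis 1)) := by
  classical
  set ρ : Measure ℝ := volume.restrict (Set.Ioo (-Real.pi) Real.pi) with hρ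
  haveI : IsFiniteMeasure ρ :=
    ⟨by rw [hρ, Measure.restrict_apply_univ, Real.volume_Ioo]; exact ENNReal.ofReal_lt_top⟩
  haveI : IsFiniteMeasure (heisSigma 1 r₂ t₂) := Stmt15.heisSigma_finite r₂ t₂
  haveI : IsFiniteMeasure (heisSigma 1 r₃ t₃) := Stmt15.heisSigma_finite r₃ t₃
  haveI : IsFiniteMeasure (Measure.map (Stmt15.phiH r₂ t₂) ρ) :=
    ⟨by rw [Measure.map_apply (Stmt15.measurable_phiH r₂ t₂) MeasurableSet.univ,
        Set.preimage_univ]; exact measure_lt_top _ _⟩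
  haveI : IsFiniteMeasure (Measure.map (Stmt15.phiH r₃ t₃) ρ) :=
    ⟨by rw [Measure.map_apply (Stmt15.measurable_phiH r₃ t₃) MeasurableSet.univ,
        Set.preimage_univ]; exact measure_lt_top _ _⟩
  have hmul := Stmt15.continuous_mul3.measurable
  have hGmeas : Measurable (Stmt15.Gmap r₁ r₂ r₃ t₁ t₂ t₃) :=
    (Stmt15.contDiff_Gmap r₁ r₂ r₃ t₁ t₂ t₃).continuous.measurable
  have hACprod : (heisSigma 1 r₁ t₁).prod ((heisSigma 1 r₂ t₂).prod (heisSigma 1 r₃ t₃))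
      ≪ (Measure.map (Stmt15.phiH r₁ t₁) ρ).prod
          ((Measure.map (Stmt15.phiH r₂ t₂) ρ).prod (Measure.map (Stmt15.phiH r₃ t₃) ρ)) := by
    have h1 := Stmt15.heisSigma_ac r₁ t₁
    have h2 := Stmt15.heisSigma_ac r₂ t₂
    have h3 := Stmt15.heisSigma_ac r₃ t₃
    rw [← hρ] at h1 h2 h3
    exact h1.prod (h2.prod h3)
  refine (hACprod.map hmul).trans ?_
  have hprodmapmeas : Measurable (Prod.map (Stmt15.phiH r₁ t₁)
      (Prod.map (Stmt15.phiH r₂ t₂) (Stmt15.phiH r₃ t₃))) :=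
    (Stmt15.measurable_phiH r₁ t₁).prodMap
      ((Stmt15.measurable_phiH r₂ t₂).prodMap (Stmt15.measurable_phiH r₃ t₃))
  have hmaps : (Measure.map (Stmt15.phiH r₁ t₁) ρ).prod
      ((Measure.map (Stmt15.phiH r₂ t₂) ρ).prod (Measure.map (Stmt15.phiH r₃ t₃) ρ))
      = Measure.map (Prod.map (Stmt15.phiH r₁ t₁)
          (Prod.map (Stmt15.phiH r₂ t₂) (Stmt15.phiH r₃ t₃))) (ρ.prod (ρ.prod ρ)) := by
    rw [Measure.map_prod_map _ _ (Stmt15.measurable_phiH r₂ t₂) (Stmt15.measurable_phiH r₃ t₃),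
      Measure.map_prod_map _ _ (Stmt15.measurable_phiH r₁ t₁)
        ((Stmt15.measurable_phiH r₂ t₂).prodMap (Stmt15.measurable_phiH r₃ t₃))]
  rw [hmaps, Measure.map_map hmul hprodmapmeas, Stmt15.comp_eq r₁ r₂ r₃ t₁ t₂ t₃,
    ← Measure.map_map Stmt15.measurable_Amap hGmeas]
  have hdet0 : volume {x : ℝ × ℝ × ℝ |
      (fderiv ℝ (Stmt15.Gmap r₁ r₂ r₃ t₁ t₂ t₃) x).det = 0} = 0 := by
    have hEq : ∀ p : ℝ × ℝ × ℝ, (fderiv ℝ (Stmt15.Gmap r₁ r₂ r₃ t₁ t₂ t₃) p).det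
        = Stmt15.detF r₁ r₂ r₃ p.1 p.2.1 p.2.2 := by
      intro p
      rw [(Stmt15.hasFDerivAt_Gmap r₁ r₂ r₃ t₁ t₂ t₃ p).fderiv]
      simp only [Stmt15.dG]
      rw [Stmt15.det_clm3]
      simp only [Stmt15.detF]
      try ring
    have hset : {x : ℝ × ℝ × ℝ | (fderiv ℝ (Stmt15.Gmap r₁ r₂ r₃ t₁ t₂ t₃) x).det = 0}
        = {p : ℝ × ℝ × ℝ | Stmt15.detF r₁ r₂ r₃ p.1 p.2.1 p.2.2 = 0} := by
      ext p
      rw [Set.mem_setOf_eq, Set.mem_setOf_eq, hEq]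
    rw [hset]
    exact Stmt15.detF_null r₁ r₂ r₃ hr₁ hr₂ hr₃
  have hGAC : Measure.map (Stmt15.Gmap r₁ r₂ r₃ t₁ t₂ t₃) (ρ.prod (ρ.prod ρ))
      ≪ (volume : Measure (ℝ × ℝ × ℝ)) := by
    have hle : ρ.prod (ρ.prod ρ) ≤ (volume : Measure (ℝ × ℝ × ℝ)) := by
      rw [hρ, Measure.prod_restrict, Measure.prod_restrict]
      exact Measure.restrict_le_self
    exact (Measure.absolutelyContinuous_of_le (Measure.map_mono hle hGmeas)).trans
      (Stmt15.mapAC volume (Stmt15.contDiff_Gmap r₁ r₂ r₃ t₁ t₂ t₃) hdet0)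
  have hfin := hGAC.map Stmt15.measurable_Amap
  rwa [Stmt15.Amap_measurePreserving.map_eq] at hfin
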